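/- An element U ∈ D_{p,q} is invertible if and only if Det(U) ≠ 0, and in that case U⁻¹ = Adj(U)/Det(U), where Adj(U) := ∏_{∅ ≠ A ⊆ {1,…,n}} U^{(A)} is the product of all conjugates of U other than U itself. -/

import Mathlib

open Finset
open scoped symmDiff

noncomputable section

/-- Sign of the `i`-th generator: `+1` if `i < p`, `-1` otherwise. -/
def eps (p : ℕ) {n : ℕ} (i : Fin n) : ℝ := if (i : ℕ) < p then 1 else -1

lemma eps_mul_self (p : ℕ) {n : ℕ} (i : Fin n) : eps p i * eps p i = 1 := by
  unfold eps; split <;> norm_num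

/-- Structure constant `σ(A,B) = ∏_{i ∈ A ∩ B} ε_i`. -/
def sgn (p : ℕ) {n : ℕ} (A B : Finset (Fin n)) : ℝ := ∏ i ∈ A ∩ B, eps p i

/-- The commutative analogue of a Clifford algebra `D_{p,q}`, realized as the space of
coefficient functions on the basis `{e_A : A ⊆ {1,…,n}}`, `n = p + q`, with multiplication
`e_A e_B = σ(A,B) e_{A Δ B}`. -/
def Dl (p q : ℕ) : Type := Finset (Fin (p + q)) → ℝ

namespace Dl

variable {p q : ℕ}

instance : AddCommGroup (Dl p q) := Pi.addCommGroup
instance : Module ℝ (Dl p q) := Pi.module _ _ _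

/-- Multiplication: `(U·V)_C = ∑_{A Δ B = C} σ(A,B) U_A V_B`. -/
def mul' (U V : Dl p q) : Dl p q :=
  fun C => ∑ A : Finset (Fin (p + q)), sgn p A (A ∆ C) * U A * V (A ∆ C)

/-- The unit `1 = e_∅`. -/
def one' : Dl p q := fun A => if A = ∅ then 1 else 0

lemma sgn_empty_left {n : ℕ} (B : Finset (Fin n)) : sgn p ∅ B = 1 := by
  simp [sgn]

lemma sgn_empty_right {n : ℕ} (A : Finset (Fin n)) : sgn p A ∅ = 1 := by
  simp [sgn]

lemma sgn_prod_ite {n : ℕ} (X Y : Finset (Fin n)) :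
    sgn p X Y = ∏ i : Fin n, (if i ∈ X ∩ Y then eps p i else 1) := by
  rw [Finset.prod_ite_mem, Finset.univ_inter, sgn]

lemma sgn_cocycle {n : ℕ} (p : ℕ) (A B C : Finset (Fin n)) :
    sgn p B (B ∆ C) * sgn p A (A ∆ B) = sgn p A (A ∆ C) * sgn p (A ∆ B) (B ∆ C) := by
  rw [sgn_prod_ite, sgn_prod_ite, sgn_prod_ite, sgn_prod_ite,
    ← Finset.prod_mul_distrib, ← Finset.prod_mul_distrib]
  refine Finset.prod_congr rfl fun i _ => ?_
  by_cases hA : i ∈ A <;> by_cases hB : i ∈ B <;> by_cases hC : i ∈ C <;>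
    simp [Finset.mem_inter, Finset.mem_symmDiff, hA, hB, hC]

lemma sd_helper {n : ℕ} (A B C : Finset (Fin n)) : (A ∆ B) ∆ (A ∆ C) = B ∆ C := by
  rw [symmDiff_comm A B, symmDiff_assoc, symmDiff_symmDiff_cancel_left]

theorem mul_comm' (U V : Dl p q) : mul' U V = mul' V U := by
  funext C
  refine Fintype.sum_equiv
    (Function.Involutive.toPerm (fun A => A ∆ C)
      (show Function.Involutive (fun A => A ∆ C) from
        fun A => symmDiff_symmDiff_cancel_right C A)) _ _ fun A => ?_
  simp only [Function.Involutive.coe_toPerm]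
  rw [symmDiff_symmDiff_cancel_right]
  rw [show sgn p A (A ∆ C) = sgn p (A ∆ C) A by rw [sgn, sgn, Finset.inter_comm]]
  ring

theorem mul_assoc' (U V W : Dl p q) : mul' (mul' U V) W = mul' U (mul' V W) := by
  funext C
  show ∑ B : Finset (Fin (p+q)), sgn p B (B ∆ C) * (mul' U V) B * W (B ∆ C)
      = ∑ A : Finset (Fin (p+q)), sgn p A (A ∆ C) * U A * (mul' V W) (A ∆ C)
  unfold mul'
  simp only [Finset.sum_mul, Finset.mul_sum]
  rw [Finset.sum_comm]
  refine Finset.sum_congr rfl fun A _ => ?_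
  refine Fintype.sum_equiv
    (Function.Involutive.toPerm (fun B => A ∆ B)
      (show Function.Involutive (fun B => A ∆ B) from
        fun B => symmDiff_symmDiff_cancel_left A B)) _ _ fun B => ?_
  simp only [Function.Involutive.coe_toPerm]
  rw [sd_helper]
  have h := sgn_cocycle p A B C
  linear_combination (U A * V (A ∆ B) * W (B ∆ C)) * h

theorem one_mul' (U : Dl p q) : mul' one' U = U := by
  funext C
  unfold mul' one'
  rw [Finset.sum_eq_single (∅ : Finset (Fin (p+q)))]
  · simp [sgn_empty_left, bot_eq_empty.symm ▸ (bot_symmDiff C : (⊥ : Finset (Fin (p+q))) ∆ C = C)]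
  · intro A _ hA; simp [hA]
  · simp

theorem mul_one' (U : Dl p q) : mul' U one' = U := by
  funext C
  unfold mul' one'
  rw [Finset.sum_eq_single C]
  · simp [sgn, symmDiff_self, bot_eq_empty]
  · intro A _ hA
    have : A ∆ C ≠ ∅ := fun h =>
      hA (symmDiff_eq_bot.mp (by simpa [Finset.bot_eq_empty] using h))
    simp [this]
  · simp

theorem zero_mul' (U : Dl p q) : mul' 0 U = 0 := by
  funext C; unfold mul'
  simp [show ∀ A, (0 : Dl p q) A = 0 from fun _ => rfl]

theorem mul_zero' (U : Dl p q) : mul' U 0 = 0 := by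
  funext C; unfold mul'
  simp [show ∀ A, (0 : Dl p q) A = 0 from fun _ => rfl]

theorem left_distrib' (U V W : Dl p q) : mul' U (V + W) = mul' U V + mul' U W := by
  funext C
  show ∑ A : Finset (Fin (p+q)), sgn p A (A ∆ C) * U A * (V (A ∆ C) + W (A ∆ C))
      = mul' U V C + mul' U W C
  unfold mul'
  rw [← Finset.sum_add_distrib]
  exact Finset.sum_congr rfl fun A _ => by ring

theorem right_distrib' (U V W : Dl p q) : mul' (U + V) W = mul' U W + mul' V W := by
  funext C
  show ∑ A : Finset (Fin (p+q)), sgn p A (A ∆ C) * (U A + V A) * W (A ∆ C)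
      = mul' U W C + mul' V W C
  unfold mul'
  rw [← Finset.sum_add_distrib]
  exact Finset.sum_congr rfl fun A _ => by ring

instance : CommRing (Dl p q) :=
  { (inferInstance : AddCommGroup (Dl p q)) with
    mul := mul'
    one := one'
    left_distrib := left_distrib'
    right_distrib := right_distrib'
    zero_mul := zero_mul'
    mul_zero := mul_zero'
    mul_assoc := mul_assoc'
    one_mul := one_mul'
    mul_one := mul_one'
    mul_comm := mul_comm' }

lemma mul_def (U V : Dl p q) : U * V = mul' U V := rfl
lemma one_def : (1 : Dl p q) = one' := rfl

instance : Algebra ℝ (Dl p q) :=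
  Algebra.ofModule
    (fun r U V => by
      funext C
      show ∑ A : Finset (Fin (p+q)), sgn p A (A ∆ C) * (r * U A) * V (A ∆ C)
          = r * ∑ A : Finset (Fin (p+q)), sgn p A (A ∆ C) * U A * V (A ∆ C)
      rw [Finset.mul_sum]
      exact Finset.sum_congr rfl fun A _ => by ring)
    (fun r U V => by
      funext C
      show ∑ A : Finset (Fin (p+q)), sgn p A (A ∆ C) * U A * (r * V (A ∆ C))
          = r * ∑ A : Finset (Fin (p+q)), sgn p A (A ∆ C) * U A * V (A ∆ C)
      rw [Finset.mul_sum]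
      exact Finset.sum_congr rfl fun A _ => by ring)

/-- The coefficient of the basis element `e_A` in `U`. -/
def coeff (U : Dl p q) (A : Finset (Fin (p + q))) : ℝ := U A

/-- The basis element `e_A`. -/
def e (A : Finset (Fin (p + q))) : Dl p q := fun B => if B = A then 1 else 0

/-- The conjugation negating the generator `e_l`. -/
def conj (l : Fin (p + q)) (U : Dl p q) : Dl p q :=
  fun A => if l ∈ A then -U A else U A

/-- The superposition of the conjugations `(·)^{(i)}` over all `i ∈ S`:
it multiplies the coefficient of `e_B` by `(-1)^{|S ∩ B|}`. -/
def conjS (S : Finset (Fin (p + q))) (U : Dl p q) : Dl p q :=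
  fun B => (-1 : ℝ) ^ (S ∩ B).card * U B

/-- The regular (left multiplication) representation of `D_{p,q}`. -/
def rep (U : Dl p q) : Matrix (Finset (Fin (p + q))) (Finset (Fin (p + q))) ℝ :=
  fun C B => coeff (U * e B) C

/-- The determinant of an element of `D_{p,q}`. -/
def Det (U : Dl p q) : ℝ := (rep U).det

/-- The adjoint: product of all conjugates of `U` other than `U` itself. -/
def Adj (U : Dl p q) : Dl p q := ∏ A ∈ Finset.univ.erase (∅ : Finset (Fin (p + q))), conjS A U

end Dl

namespace InvAux

open Dl

/-- A square root of `eps p i` in `ℂ`. -/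
noncomputable def r (p : ℕ) {n : ℕ} (i : Fin n) : ℂ :=
  if (i : ℕ) < p then 1 else Complex.I

lemma r_mul_r (p : ℕ) {n : ℕ} (i : Fin n) : r p i * r p i = (eps p i : ℂ) := by
  unfold r eps; split <;> simp [Complex.I_mul_I]

lemma r_mul_conj (p : ℕ) {n : ℕ} (i : Fin n) : r p i * (starRingEnd ℂ) (r p i) = 1 := by
  unfold r; split <;> simp

/-- The square root of `eps p i` attached to a character indexed by `t`. -/
noncomputable def s (p : ℕ) {n : ℕ} (t : Finset (Fin n)) (i : Fin n) : ℂ :=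
  (if i ∈ t then -1 else 1) * r p i

lemma s_mul_s (p : ℕ) {n : ℕ} (t : Finset (Fin n)) (i : Fin n) :
    s p t i * s p t i = (eps p i : ℂ) := by
  unfold s
  rw [show (if i ∈ t then (-1:ℂ) else 1) * r p i * ((if i ∈ t then (-1:ℂ) else 1) * r p i)
      = ((if i ∈ t then (-1:ℂ) else 1) * (if i ∈ t then (-1:ℂ) else 1)) * (r p i * r p i) by
        ring]
  rw [r_mul_r]
  split <;> ring

lemma prod_eq_prod_univ {n : ℕ} (X : Finset (Fin n)) (f : Fin n → ℂ) :
    ∏ i ∈ X, f i = ∏ i : Fin n, (if i ∈ X then f i else 1) := by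
  rw [Finset.prod_ite_mem, Finset.univ_inter]

lemma prod_s_mul (p : ℕ) {n : ℕ} (t A B : Finset (Fin n)) :
    (∏ i ∈ A, s p t i) * (∏ i ∈ B, s p t i)
      = (sgn p A B : ℂ) * ∏ i ∈ A ∆ B, s p t i := by
  have hs : (sgn p A B : ℂ) = ∏ i ∈ A ∩ B, (eps p i : ℂ) := by
    rw [sgn]; push_cast; rfl
  rw [hs, prod_eq_prod_univ A, prod_eq_prod_univ B, prod_eq_prod_univ (A ∩ B),
    prod_eq_prod_univ (A ∆ B), ← Finset.prod_mul_distrib, ← Finset.prod_mul_distrib]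
  refine Finset.prod_congr rfl fun i _ => ?_
  by_cases hA : i ∈ A <;> by_cases hB : i ∈ B <;>
    simp [Finset.mem_inter, Finset.mem_symmDiff, hA, hB, s_mul_s]

variable {p q : ℕ}

/-- The character of `Dl p q` indexed by `t`. -/
noncomputable def chi (t : Finset (Fin (p + q))) : Dl p q →+* ℂ where
  toFun U := ∑ B : Finset (Fin (p + q)), (U B : ℂ) * ∏ i ∈ B, s p t i
  map_one' := by
    show ∑ B : Finset (Fin (p+q)), (((1 : Dl p q)) B : ℂ) * ∏ i ∈ B, s p t i = 1
    rw [Dl.one_def]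
    unfold Dl.one'
    rw [Finset.sum_eq_single (∅ : Finset (Fin (p + q)))] <;> simp +contextual
  map_mul' U V := by
    show ∑ C : Finset (Fin (p+q)), ((Dl.mul' U V) C : ℂ) * ∏ i ∈ C, s p t i
        = (∑ A : Finset (Fin (p+q)), (U A : ℂ) * ∏ i ∈ A, s p t i)
          * (∑ B : Finset (Fin (p+q)), (V B : ℂ) * ∏ i ∈ B, s p t i)
    rw [Finset.sum_mul_sum]
    unfold Dl.mul'
    push_cast
    simp only [Finset.sum_mul]
    rw [Finset.sum_comm]
    refine Finset.sum_congr rfl fun A _ => ?_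
    refine Fintype.sum_equiv
      (Function.Involutive.toPerm (fun C => A ∆ C)
        (show Function.Involutive (fun C => A ∆ C) from
          fun C => symmDiff_symmDiff_cancel_left A C)) _ _ fun C => ?_
    simp only [Function.Involutive.coe_toPerm]
    have h := prod_s_mul p t A (A ∆ C)
    rw [symmDiff_symmDiff_cancel_left] at h
    linear_combination (-((U A : ℂ) * (V (A ∆ C) : ℂ))) * h
  map_zero' := by
    show ∑ B : Finset (Fin (p+q)), (((0 : Dl p q)) B : ℂ) * ∏ i ∈ B, s p t i = 0
    simp [show ∀ B, (0 : Dl p q) B = 0 from fun _ => rfl]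
  map_add' U V := by
    show ∑ B : Finset (Fin (p+q)), (((U + V)) B : ℂ) * ∏ i ∈ B, s p t i = _
    rw [← Finset.sum_add_distrib]
    refine Finset.sum_congr rfl fun B _ => ?_
    show ((U B + V B : ℝ) : ℂ) * _ = _
    push_cast; ring

lemma chi_apply (t : Finset (Fin (p + q))) (U : Dl p q) :
    chi t U = ∑ B : Finset (Fin (p + q)), (U B : ℂ) * ∏ i ∈ B, s p t i := rfl

lemma chi_smul (t : Finset (Fin (p + q))) (c : ℝ) (U : Dl p q) :
    chi t (c • U) = (c : ℂ) * chi t U := by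
  rw [chi_apply, chi_apply, Finset.mul_sum]
  refine Finset.sum_congr rfl fun B _ => ?_
  show ((c * U B : ℝ) : ℂ) * _ = _
  push_cast; ring

lemma chi_e (t B : Finset (Fin (p + q))) :
    chi t (Dl.e B) = ∏ i ∈ B, s p t i := by
  rw [chi_apply]
  rw [Finset.sum_eq_single B] <;> unfold Dl.e <;> simp +contextual

lemma s_symmDiff (t A : Finset (Fin (p + q))) (i : Fin (p + q)) :
    s p (t ∆ A) i = (if i ∈ A then (-1 : ℂ) else 1) * s p t i := by
  unfold s
  by_cases hA : i ∈ A <;> by_cases ht : i ∈ t <;>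
    simp [Finset.mem_symmDiff, hA, ht]

lemma chi_conjS (t A : Finset (Fin (p + q))) (U : Dl p q) :
    chi t (Dl.conjS A U) = chi (t ∆ A) U := by
  rw [chi_apply, chi_apply]
  refine Finset.sum_congr rfl fun B _ => ?_
  show (((-1 : ℝ) ^ (A ∩ B).card * U B : ℝ) : ℂ) * _ = _
  have : ∏ i ∈ B, s p (t ∆ A) i
      = ((-1 : ℂ) ^ (A ∩ B).card) * ∏ i ∈ B, s p t i := by
    rw [Finset.prod_congr rfl fun i _ => s_symmDiff t A i, Finset.prod_mul_distrib,
      Finset.prod_ite_mem, Finset.prod_const, Finset.inter_comm]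
  rw [this]
  push_cast; ring

/-- The character matrix. -/
noncomputable def P (p q : ℕ) :
    Matrix (Finset (Fin (p + q))) (Finset (Fin (p + q))) ℂ :=
  fun t B => ∏ i ∈ B, s p t i

lemma P_mul_conjTranspose :
    P p q * (P p q).conjTranspose
      = ((2 : ℂ) ^ (p + q)) • (1 : Matrix (Finset (Fin (p + q))) (Finset (Fin (p + q))) ℂ) := by
  ext t t'
  rw [Matrix.mul_apply]
  simp only [Matrix.conjTranspose_apply, P, Complex.star_def]
  have key : ∀ B : Finset (Fin (p + q)),
      (∏ i ∈ B, s p t i) * (starRingEnd ℂ) (∏ i ∈ B, s p t' i)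
        = ∏ i ∈ B, (fun i => if i ∈ t ∆ t' then (-1 : ℂ) else 1) i := by
    intro B
    rw [map_prod, ← Finset.prod_mul_distrib]
    refine Finset.prod_congr rfl fun i _ => ?_
    unfold s
    rw [map_mul]
    have hr := r_mul_conj p i
    have hre : ((if i ∈ t then (-1:ℂ) else 1) * r p i)
        * ((starRingEnd ℂ) (if i ∈ t' then (-1:ℂ) else 1) * (starRingEnd ℂ) (r p i))
        = ((if i ∈ t then (-1:ℂ) else 1) * (starRingEnd ℂ) (if i ∈ t' then (-1:ℂ) else 1))
          * (r p i * (starRingEnd ℂ) (r p i)) := by ring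
    rw [hre, hr, mul_one]
    by_cases h1 : i ∈ t <;> by_cases h2 : i ∈ t' <;>
      simp [Finset.mem_symmDiff, h1, h2]
  simp only [key]
  have hsum : ∑ B : Finset (Fin (p + q)),
      ∏ i ∈ B, (fun i => if i ∈ t ∆ t' then (-1 : ℂ) else 1) i
      = ∏ i : Fin (p + q), ((if i ∈ t ∆ t' then (-1 : ℂ) else 1) + 1) := by
    rw [Finset.prod_add, Finset.powerset_univ]
    simp
  rw [hsum]
  by_cases h : t = t'
  · subst h
    simp [symmDiff_self, Finset.bot_eq_empty, Matrix.one_apply]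
    norm_num
  · obtain ⟨i, hi⟩ : (t ∆ t').Nonempty := by
      rw [Finset.nonempty_iff_ne_empty]
      intro hc
      exact h (symmDiff_eq_bot.mp (by simpa [Finset.bot_eq_empty] using hc))
    rw [Finset.prod_eq_zero (Finset.mem_univ i)]
    · simp [Matrix.one_apply, h]
    · simp [hi]

lemma two_pow_ne : ((2 : ℂ) ^ (p + q)) ≠ 0 := pow_ne_zero _ two_ne_zero

/-- A two-sided inverse of the character matrix. -/
noncomputable def Q (p q : ℕ) :
    Matrix (Finset (Fin (p + q))) (Finset (Fin (p + q))) ℂ :=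
  ((2 : ℂ) ^ (p + q))⁻¹ • (P p q).conjTranspose

lemma P_mul_Q : P p q * Q p q = 1 := by
  rw [Q, Matrix.mul_smul, P_mul_conjTranspose, smul_smul,
    inv_mul_cancel₀ (two_pow_ne (p := p) (q := q)), one_smul]

lemma Q_mul_P : Q p q * P p q = 1 := mul_eq_one_comm.mp P_mul_Q

lemma P_det_ne_zero : (P p q).det ≠ 0 := by
  intro h
  have h2 := congrArg Matrix.det (P_mul_Q (p := p) (q := q))
  rw [Matrix.det_mul, h, zero_mul, Matrix.det_one] at h2
  exact zero_ne_one h2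

/-- Characters jointly separate points. -/
lemma chi_injective (U V : Dl p q) (h : ∀ t, chi t U = chi t V) : U = V := by
  have hmv : (P p q).mulVec (fun B => (U B : ℂ)) = (P p q).mulVec (fun B => (V B : ℂ)) := by
    funext t
    have := h t
    rw [chi_apply, chi_apply] at this
    simpa [Matrix.mulVec, dotProduct, P, mul_comm] using this
  have h5 : ∀ v : Finset (Fin (p + q)) → ℂ, (Q p q).mulVec ((P p q).mulVec v) = v := by
    intro v
    rw [Matrix.mulVec_mulVec, Q_mul_P, Matrix.one_mulVec]
  have h6 := congrArg (fun v => (Q p q).mulVec v) hmv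
  rw [h5, h5] at h6
  funext B
  exact_mod_cast congrFun h6 B

lemma P_mul_repC (U : Dl p q) :
    P p q * (Dl.rep U).map Complex.ofReal
      = Matrix.diagonal (fun t => chi t U) * P p q := by
  ext t B
  rw [Matrix.mul_apply, Matrix.diagonal_mul]
  have : ∑ C, P p q t C * ((Dl.rep U).map Complex.ofReal) C B = chi t (U * Dl.e B) := by
    rw [chi_apply]
    refine Finset.sum_congr rfl fun C _ => ?_
    rw [Matrix.map_apply]
    show P p q t C * ((Dl.rep U) C B : ℂ) = ((U * Dl.e B) C : ℂ) * _
    rw [Dl.rep]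
    show P p q t C * ((Dl.coeff (U * Dl.e B) C : ℝ) : ℂ) = _
    rw [Dl.coeff, P, mul_comm]
  rw [this, map_mul, chi_e]
  rfl

/-- The determinant is the product of the characters. -/
lemma chi_det (U : Dl p q) : ∏ t, chi t U = (Dl.Det U : ℂ) := by
  have h := congrArg Matrix.det (P_mul_repC U)
  rw [Matrix.det_mul, Matrix.det_mul, Matrix.det_diagonal] at h
  have h2 : ((Dl.rep U).map Complex.ofReal).det = ((Dl.Det U : ℂ)) := by
    have h3 := (RingHom.map_det Complex.ofRealHom (Dl.rep U)).symm
    rw [RingHom.mapMatrix_apply] at h3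
    rw [Dl.Det]
    exact h3
  rw [h2] at h
  have h4 : (P p q).det * (∏ t, chi t U) = (P p q).det * ((Dl.Det U : ℂ)) := by
    linear_combination -h
  exact mul_left_cancel₀ P_det_ne_zero h4

/-- The key identity: `U * Adj U = Det U • 1`. -/
lemma mul_adj (U : Dl p q) : U * Dl.Adj U = Dl.Det U • (1 : Dl p q) := by
  apply chi_injective
  intro t
  rw [chi_smul, map_one, mul_one, map_mul, Dl.Adj, map_prod]
  have h1 : ∀ A ∈ Finset.univ.erase (∅ : Finset (Fin (p + q))),
      chi t (Dl.conjS A U) = chi (t ∆ A) U := fun A _ => chi_conjS t A U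
  rw [Finset.prod_congr rfl h1]
  have h0 : chi t U = chi (t ∆ (∅ : Finset (Fin (p + q)))) U := by
    rw [show (∅ : Finset (Fin (p + q))) = ⊥ from rfl, symmDiff_bot]
  rw [h0, Finset.mul_prod_erase Finset.univ (fun A => chi (t ∆ A) U) (Finset.mem_univ ∅)]
  rw [← chi_det]
  exact Fintype.prod_equiv
    (Function.Involutive.toPerm (fun A => t ∆ A)
      (fun A => symmDiff_symmDiff_cancel_left t A)) _ _ fun A => rfl

lemma det_mul' (U V : Dl p q) : Dl.Det (U * V) = Dl.Det U * Dl.Det V := by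
  have : ((Dl.Det (U * V) : ℂ)) = ((Dl.Det U * Dl.Det V : ℝ) : ℂ) := by
    push_cast
    rw [← chi_det, ← chi_det, ← chi_det, ← Finset.prod_mul_distrib]
    exact Finset.prod_congr rfl fun t _ => map_mul _ _ _
  exact_mod_cast this

lemma det_one' : Dl.Det (1 : Dl p q) = 1 := by
  have : ((Dl.Det (1 : Dl p q) : ℂ)) = 1 := by
    rw [← chi_det]
    simp
  exact_mod_cast this

end InvAux

/-- `U` is invertible iff `Det(U) ≠ 0`, and in that case
`U⁻¹ = Adj(U)/Det(U)` where `Adj(U)` is the product of all conjugates of `U` other than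
`U` itself. -/
theorem inverse_formula (p q : ℕ) (U : Dl p q) :
    (IsUnit U ↔ Dl.Det U ≠ 0) ∧
    (Dl.Det U ≠ 0 → U * ((Dl.Det U)⁻¹ • Dl.Adj U) = 1) := by
  have hformula : Dl.Det U ≠ 0 → U * ((Dl.Det U)⁻¹ • Dl.Adj U) = 1 := by
    intro hDet
    rw [mul_smul_comm, InvAux.mul_adj U, smul_smul, inv_mul_cancel₀ hDet, one_smul]
  refine ⟨⟨fun hU => ?_, fun hDet => IsUnit.of_mul_eq_one _ (hformula hDet)⟩, hformula⟩
  obtain ⟨V, hV⟩ := IsUnit.exists_right_inv hU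
  intro h
  have := InvAux.det_mul' U V
  rw [hV, InvAux.det_one', h, zero_mul] at this
  exact one_ne_zero (α := ℝ) this
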